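/- arXiv:1401.6452 — 5 statements merged into one kernel-verified Lean document; each statement's English description precedes it below -/
import Mathlib

section
/- Let G be a finite connected graph with positive integer vertex multiplicities mult(i). For each vertex i, say a real-valued function φ_i defined on the star of i (i.e., given by values φ_i(j) for j = i and all j adjacent to i) is 'linear at i' if φ_i(i)·Σ_{j∼i} mult(j) = Σ_{j∼i} mult(j)·φ_i(j), where j∼i ranges over neighbors of i. Define d⁰ sending a collection {φ_i} of functions linear at each vertex to the collection {φ_j − φ_k restricted to the edge jk}_{j≺k}, and define deg({ψ_{jk}}) = Σ_{j≺k} mult(j)·mult(k)·(ψ_{jk}(k) − ψ_{jk}(j)). Then deg ∘ d⁰ = 0. -/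
open Finset

/-- `deg ∘ d⁰ = 0` on a finite connected graph. A collection of vertex-star
functions is encoded by `φ : V → V → ℝ`, where `φ i j` is the value of `φ_i`
at `j` (meaningful for `j = i` or `j` adjacent to `i`).  Linearity at `i` reads
`φ_i(i)·Σ_{j∼i} mult(j) = Σ_{j∼i} mult(j)·φ_i(j)`.  The edge cochain
`d⁰({φ_i})_{jk} = φ_j − φ_k` (for `j ≺ k`) has value `φ j k − φ k k` at `k`
and `φ j j − φ k j` at `j`, and its degree vanishes. -/
theorem deg_comp_d0_eq_zero
    {V : Type} [Fintype V] [LinearOrder V]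
    (Adj : V → V → Prop) [DecidableRel Adj]
    (hsymm : ∀ j k, Adj j k → Adj k j) (hirr : ∀ j, ¬ Adj j j)
    (hconn : ∀ u v : V, Relation.ReflTransGen Adj u v)
    (mult : V → ℤ) (hmult : ∀ i, 0 < mult i)
    (φ : V → V → ℝ)
    (hlin : ∀ i, φ i i * (∑ j, if Adj i j then (mult j : ℝ) else 0)
        = ∑ j, if Adj i j then (mult j : ℝ) * φ i j else 0) :
    ∑ j, ∑ k, (if Adj j k ∧ j < k then
      (mult j : ℝ) * (mult k : ℝ) * ((φ j k - φ k k) - (φ j j - φ k j)) else 0) = 0 := by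
  have key : ∀ j : V,
      (∑ k, if Adj j k then (mult j : ℝ) * (mult k : ℝ) * (φ j k - φ j j) else 0) = 0 := by
    intro j
    calc (∑ k, if Adj j k then (mult j : ℝ) * (mult k : ℝ) * (φ j k - φ j j) else 0)
        = ∑ k, ((mult j : ℝ) * ((if Adj j k then (mult k : ℝ) * φ j k else 0)
            - φ j j * (if Adj j k then (mult k : ℝ) else 0))) := by
          refine Finset.sum_congr rfl fun k _ => ?_
          split <;> ring
      _ = (mult j : ℝ) * ((∑ k, if Adj j k then (mult k : ℝ) * φ j k else 0)
            - φ j j * (∑ k, if Adj j k then (mult k : ℝ) else 0)) := by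
          rw [← Finset.mul_sum, Finset.sum_sub_distrib, ← Finset.mul_sum]
      _ = 0 := by rw [hlin j]; ring
  calc ∑ j, ∑ k, (if Adj j k ∧ j < k then
        (mult j : ℝ) * (mult k : ℝ) * ((φ j k - φ k k) - (φ j j - φ k j)) else 0)
      = (∑ j, ∑ k, if Adj j k ∧ j < k then
          (mult j : ℝ) * (mult k : ℝ) * (φ j k - φ j j) else 0)
        + (∑ j, ∑ k, if Adj j k ∧ j < k then
          (mult j : ℝ) * (mult k : ℝ) * (φ k j - φ k k) else 0) := by
        rw [← Finset.sum_add_distrib]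
        refine Finset.sum_congr rfl fun j _ => ?_
        rw [← Finset.sum_add_distrib]
        refine Finset.sum_congr rfl fun k _ => ?_
        split <;> ring
    _ = (∑ j, ∑ k, if Adj j k ∧ j < k then
          (mult j : ℝ) * (mult k : ℝ) * (φ j k - φ j j) else 0)
        + (∑ j, ∑ k, if Adj k j ∧ k < j then
          (mult k : ℝ) * (mult j : ℝ) * (φ j k - φ j j) else 0) := by
        congr 1
        exact Finset.sum_comm
    _ = ∑ j, ∑ k, (if Adj j k then (mult j : ℝ) * (mult k : ℝ) * (φ j k - φ j j) else 0) := by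
        rw [← Finset.sum_add_distrib]
        refine Finset.sum_congr rfl fun j _ => ?_
        rw [← Finset.sum_add_distrib]
        refine Finset.sum_congr rfl fun k _ => ?_
        by_cases hadj : Adj j k
        · have hne : j ≠ k := fun h => hirr j (h ▸ hadj)
        -- exactly one of j < k, k < j
          rcases lt_or_gt_of_ne hne with hlt | hgt
          · rw [if_pos ⟨hadj, hlt⟩, if_neg (fun h => absurd h.2 (not_lt.mpr hlt.le)),
              if_pos hadj]; ring
          · rw [if_neg (fun h => absurd h.2 (not_lt.mpr hgt.le)),
              if_pos ⟨hsymm j k hadj, hgt⟩, if_pos hadj]; ring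
        · rw [if_neg (fun h => hadj h.1), if_neg (fun h => hadj (hsymm k j h.1)),
            if_neg hadj]; ring
    _ = 0 := by
        rw [Finset.sum_congr rfl fun j _ => key j, Finset.sum_const, smul_zero]
end

section
/- Let G be a finite connected graph with n_E edges and positive integer vertex multiplicities. Consider the two-term complex 0 → C⁰ →^{d⁰} C¹ → 0 where C⁰ ≅ ℝ^{2n_E} is the space of collections of vertex-star functions linear at each vertex, C¹ ≅ ℝ^{2n_E} is the space of collections of affine functions on the open edges, and d⁰({φ_i})_{jk} = φ_j|_{e_{jk}} − φ_k|_{e_{jk}}. Then H¹ := C¹/im(d⁰) is one-dimensional over ℝ, and the map deg({ψ_{jk}}) = Σ_{j≺k} mult(j)·mult(k)·(ψ_{jk}(k) − ψ_{jk}(j)) descends to an isomorphism H¹ ≅ ℝ. -/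
open Finset

/-- Degree of an edge 1-cochain `η : V → V → ℝ`, where for adjacent `j < k`,
`η j k` is the value at `k` of the affine function on the edge `jk` and
`η k j` is its value at `j`. -/
def degC {V : Type} [Fintype V] [LinearOrder V] (Adj : V → V → Prop) [DecidableRel Adj]
    (mult : V → ℤ) (η : V → V → ℝ) : ℝ :=
  ∑ j, ∑ k, if Adj j k ∧ j < k then (mult j : ℝ) * (mult k : ℝ) * (η j k - η k j) else 0

/-- Linearity of a vertex-star function `φ i` at the vertex `i`. -/
def linAt {V : Type} [Fintype V] (Adj : V → V → Prop) [DecidableRel Adj]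
    (mult : V → ℤ) (φ : V → V → ℝ) (i : V) : Prop :=
  φ i i * (∑ j, if Adj i j then (mult j : ℝ) else 0)
    = ∑ j, if Adj i j then (mult j : ℝ) * φ i j else 0

section Aux
open Module
variable {V : Type} [Fintype V] [LinearOrder V]

lemma pair_sum (g : V → V → ℝ) (hg : ∀ i, g i i = 0) :
    ∑ i, ∑ j, (if i < j then g i j + g j i else 0) = ∑ i, ∑ j, g i j := by
  have h2 : ∑ i, ∑ j, (if i < j then g j i else 0)
      = ∑ i, ∑ j, (if j < i then g i j else 0) := Finset.sum_comm
  calc ∑ i, ∑ j, (if i < j then g i j + g j i else 0)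
      = ∑ i, ∑ j, ((if i < j then g i j else 0) + (if i < j then g j i else 0)) := by
        refine sum_congr rfl fun i _ => sum_congr rfl fun j _ => ?_
        by_cases h : i < j <;> simp [h]
    _ = (∑ i, ∑ j, (if i < j then g i j else 0)) + ∑ i, ∑ j, (if i < j then g j i else 0) := by
        rw [← Finset.sum_add_distrib]
        exact sum_congr rfl fun i _ => by rw [← Finset.sum_add_distrib]
    _ = ∑ i, ∑ j, ((if i < j then g i j else 0) + (if j < i then g i j else 0)) := by
        rw [h2, ← Finset.sum_add_distrib]
        exact sum_congr rfl fun i _ => by rw [← Finset.sum_add_distrib]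
    _ = ∑ i, ∑ j, g i j := by
        refine sum_congr rfl fun i _ => sum_congr rfl fun j _ => ?_
        rcases lt_trichotomy i j with h|h|h
        · simp [h, asymm h]
        · subst h; simp [hg]
        · simp [h, asymm h]

variable (Adj : V → V → Prop) [DecidableRel Adj] (mult : V → ℤ)

def w (i j : V) : ℝ := if Adj i j then (mult i : ℝ) * mult j else 0

def lap : (V → ℝ) →ₗ[ℝ] (V → ℝ) where
  toFun c := fun i => ∑ j, w Adj mult i j * (c i - c j)
  map_add' c d := by
    funext i
    simp only [Pi.add_apply]
    rw [← Finset.sum_add_distrib]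
    exact Finset.sum_congr rfl fun j _ => by ring
  map_smul' r c := by
    funext i
    simp only [Pi.smul_apply, smul_eq_mul, RingHom.id_apply, Finset.mul_sum]
    exact Finset.sum_congr rfl fun j _ => by ring

lemma lap_apply (c : V → ℝ) (i : V) :
    lap Adj mult c i = ∑ j, w Adj mult i j * (c i - c j) := rfl

lemma w_symm (hsymm : ∀ j k, Adj j k → Adj k j) (i j : V) : w Adj mult i j = w Adj mult j i := by
  unfold w
  by_cases h : Adj i j
  · simp [h, hsymm _ _ h, mul_comm]
  · have h' : ¬ Adj j i := fun h' => h (hsymm _ _ h')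
    simp [h, h']

lemma swap_w (hsymm : ∀ j k, Adj j k → Adj k j) (f : V → V → ℝ) :
    ∑ i, ∑ j, w Adj mult i j * f i j = ∑ i, ∑ j, w Adj mult i j * f j i := by
  rw [Finset.sum_comm]
  exact sum_congr rfl fun i _ => sum_congr rfl fun j _ => by
    rw [w_symm Adj mult hsymm]

lemma sum_lap (hsymm : ∀ j k, Adj j k → Adj k j) (c : V → ℝ) : ∑ i, lap Adj mult c i = 0 := by
  have h := swap_w Adj mult hsymm (fun i j => c i - c j)
  have h2 : ∑ i, ∑ j, w Adj mult i j * (c j - c i)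
      = - ∑ i, ∑ j, w Adj mult i j * (c i - c j) := by
    rw [← Finset.sum_neg_distrib]
    refine sum_congr rfl fun i _ => ?_
    rw [← Finset.sum_neg_distrib]
    exact sum_congr rfl fun j _ => by ring
  have : ∑ i, ∑ j, w Adj mult i j * (c i - c j) = 0 := by
    rw [h] at h2 ⊢
    linarith [h2]
  simpa [lap_apply] using this

lemma quad (hsymm : ∀ j k, Adj j k → Adj k j) (c : V → ℝ) :
    2 * ∑ i, c i * lap Adj mult c i = ∑ i, ∑ j, w Adj mult i j * (c i - c j) ^ 2 := by
  have hS : ∑ i, c i * lap Adj mult c i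
      = ∑ i, ∑ j, w Adj mult i j * ((c i - c j) * c i) := by
    refine sum_congr rfl fun i _ => ?_
    rw [lap_apply, Finset.mul_sum]
    exact sum_congr rfl fun j _ => by ring
  have hswap := swap_w Adj mult hsymm (fun i j => (c i - c j) * c i)
  rw [hS, two_mul]
  nth_rewrite 2 [hswap]
  rw [← Finset.sum_add_distrib]
  refine sum_congr rfl fun i _ => ?_
  rw [← Finset.sum_add_distrib]
  exact sum_congr rfl fun j _ => by ring

lemma lap_ker_const (hsymm : ∀ j k, Adj j k → Adj k j) (hconn : ∀ u v : V, Relation.ReflTransGen Adj u v)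
    (hmult : ∀ i, 0 < mult i) (c : V → ℝ)
    (h : lap Adj mult c = 0) : ∀ u v, c u = c v := by
  have hq : ∑ i, ∑ j, w Adj mult i j * (c i - c j) ^ 2 = 0 := by
    rw [← quad Adj mult hsymm c, show lap Adj mult c = 0 from h]
    simp
  have hnn : ∀ i j, (0:ℝ) ≤ w Adj mult i j * (c i - c j) ^ 2 := by
    intro i j
    apply mul_nonneg _ (sq_nonneg _)
    unfold w
    by_cases hA : Adj i j
    · simp only [if_pos hA]
      have := (hmult i); have := (hmult j)
      positivity
    · simp [hA]
  have hterm : ∀ i j, w Adj mult i j * (c i - c j) ^ 2 = 0 := by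
    intro i j
    have h1 := (Finset.sum_eq_zero_iff_of_nonneg
      (fun i _ => Finset.sum_nonneg fun j _ => hnn i j)).mp hq i (mem_univ i)
    exact (Finset.sum_eq_zero_iff_of_nonneg (fun j _ => hnn i j)).mp h1 j (mem_univ j)
  have hadj : ∀ i j, Adj i j → c i = c j := by
    intro i j hA
    have hw : (0:ℝ) < w Adj mult i j := by
      unfold w
      simp only [if_pos hA]
      have := hmult i; have := hmult j
      positivity
    have := hterm i j
    have hsq : (c i - c j) ^ 2 = 0 := by
      rcases mul_eq_zero.mp this with h' | h'
      · exact absurd h' hw.ne'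
      · exact h'
    have := pow_eq_zero_iff (n := 2) (by norm_num) |>.mp hsq
    linarith [this]
  intro u v
  induction hconn u v with
  | refl => rfl
  | tail _ hstep ih => exact ih.trans (hadj _ _ hstep)

lemma lap_surj_onto [Nonempty V] (hsymm : ∀ j k, Adj j k → Adj k j)
    (hconn : ∀ u v : V, Relation.ReflTransGen Adj u v)
    (hmult : ∀ i, 0 < mult i) (B : V → ℝ) (hB : ∑ i, B i = 0) :
    ∃ c, lap Adj mult c = B := by
  classical
  let σ : (V → ℝ) →ₗ[ℝ] ℝ :=
    { toFun := fun c => ∑ i, c i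
      map_add' := fun c d => by simp [Finset.sum_add_distrib]
      map_smul' := fun r c => by simp [Finset.mul_sum]
      }
  have hrange_le : LinearMap.range (lap Adj mult) ≤ LinearMap.ker σ := by
    rintro x ⟨c, rfl⟩
    exact sum_lap Adj mult hsymm c
  obtain ⟨i0⟩ := (inferInstance : Nonempty V)
  have hker : LinearMap.ker (lap Adj mult) = Submodule.span ℝ {(fun _ => 1 : V → ℝ)} := by
    apply le_antisymm
    · intro c hc
      have hconst := lap_ker_const Adj mult hsymm hconn hmult c hc
      have hceq : c = c i0 • (fun _ => (1:ℝ)) := funext fun v => by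
        simp [hconst v i0]
      rw [hceq]
      exact Submodule.smul_mem _ _ (Submodule.mem_span_singleton_self _)
    · rw [Submodule.span_le, Set.singleton_subset_iff]
      show lap Adj mult (fun _ => (1:ℝ)) = 0
      funext i
      simp [lap_apply]
  have hone : (fun _ => (1:ℝ) : V → ℝ) ≠ 0 := by
    intro h
    exact one_ne_zero (congrFun h i0)
  have hkerdim : finrank ℝ (LinearMap.ker (lap Adj mult)) = 1 := by
    rw [hker]
    exact finrank_span_singleton hone
  have hσsurj : Function.Surjective σ := by
    intro r
    refine ⟨Pi.single i0 r, ?_⟩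
    show ∑ i, Pi.single i0 r i = r
    simp [Finset.sum_pi_single']
  have hcard : 1 ≤ Fintype.card V := Fintype.card_pos
  have hσker : finrank ℝ (LinearMap.ker σ) = Fintype.card V - 1 := by
    have h1 := LinearMap.finrank_range_add_finrank_ker σ
    rw [LinearMap.range_eq_top.mpr hσsurj, finrank_top, Module.finrank_self,
      Module.finrank_pi] at h1
    omega
  have hT := LinearMap.finrank_range_add_finrank_ker (lap Adj mult)
  rw [hkerdim, Module.finrank_pi] at hT
  have heq : LinearMap.range (lap Adj mult) = LinearMap.ker σ := by
    apply Submodule.eq_of_le_of_finrank_le hrange_le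
    rw [hσker]
    omega
  have : B ∈ LinearMap.range (lap Adj mult) := by
    rw [heq]
    exact hB
  exact this

end Aux

/-- `H¹ = C¹/im d⁰` of the two-term complex is one-dimensional, and `deg`
descends to an isomorphism `H¹ ≅ ℝ`: namely (i) `deg ∘ d⁰ = 0`,
(ii) `deg` is surjective, and (iii) every 1-cochain of degree `0`
is a coboundary of a collection of vertex-star functions linear at each vertex. -/
theorem h1_one_dimensional_deg_iso
    {V : Type} [Fintype V] [LinearOrder V]
    (Adj : V → V → Prop) [DecidableRel Adj]
    (hsymm : ∀ j k, Adj j k → Adj k j) (hirr : ∀ j, ¬ Adj j j)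
    (hconn : ∀ u v : V, Relation.ReflTransGen Adj u v)
    (mult : V → ℤ) (hmult : ∀ i, 0 < mult i)
    (hE : ∃ j k, Adj j k) :
    (∀ φ : V → V → ℝ, (∀ i, linAt Adj mult φ i) →
      degC Adj mult (fun a b => if Adj a b ∧ a < b then φ a b - φ b b
        else if Adj a b ∧ b < a then φ b b - φ a b else 0) = 0) ∧
    Function.Surjective (degC Adj mult) ∧
    (∀ η : V → V → ℝ, degC Adj mult η = 0 →
      ∃ φ : V → V → ℝ, (∀ i, linAt Adj mult φ i) ∧
        ∀ j k, Adj j k → j < k → η j k = φ j k - φ k k ∧ η k j = φ j j - φ k j) := by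
  refine ⟨?_, ?_, ?_⟩
  -- Part (i): deg ∘ d⁰ = 0
  · intro φ hφ
    unfold degC
    set f : V → V → ℝ := fun i j =>
      if Adj i j then (mult i : ℝ) * mult j * (φ i j - φ i i) else 0 with hf
    have hstep : ∀ j k, (if Adj j k ∧ j < k then (mult j : ℝ) * (mult k : ℝ) *
          ((if Adj j k ∧ j < k then φ j k - φ k k
            else if Adj j k ∧ k < j then φ k k - φ j k else 0)
          - (if Adj k j ∧ k < j then φ k j - φ j j
            else if Adj k j ∧ j < k then φ j j - φ k j else 0)) else 0)
        = if j < k then f j k + f k j else 0 := by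
      intro j k
      by_cases hA : Adj j k
      · by_cases hlt : j < k
        · have hA' : Adj k j := hsymm _ _ hA
          have hnlt : ¬ k < j := asymm hlt
          simp only [hA, hA', hlt, hnlt, and_true, and_false, true_and, false_and,
            if_true, if_false, hf]
          ring
        · simp [hlt]
      · have hA' : ¬ Adj k j := fun h => hA (hsymm _ _ h)
        simp [hA, hA', hf]
    calc ∑ j, ∑ k, (if Adj j k ∧ j < k then (mult j : ℝ) * (mult k : ℝ) *
          ((if Adj j k ∧ j < k then φ j k - φ k k
            else if Adj j k ∧ k < j then φ k k - φ j k else 0)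
          - (if Adj k j ∧ k < j then φ k j - φ j j
            else if Adj k j ∧ j < k then φ j j - φ k j else 0)) else 0)
        = ∑ j, ∑ k, (if j < k then f j k + f k j else 0) :=
          sum_congr rfl fun j _ => sum_congr rfl fun k _ => hstep j k
      _ = ∑ i, ∑ j, f i j := pair_sum f (fun i => by simp [hf, hirr i])
      _ = 0 := by
          refine Finset.sum_eq_zero fun i _ => ?_
          have hl := hφ i
          unfold linAt at hl
          have h1 : ∑ j, f i j
              = ∑ j, ((mult i : ℝ) * (if Adj i j then (mult j : ℝ) * φ i j else 0)
                  - (mult i : ℝ) * φ i i * (if Adj i j then (mult j : ℝ) else 0)) := by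
            refine sum_congr rfl fun j _ => ?_
            by_cases h : Adj i j <;> simp [hf, h] <;> ring
          rw [h1, Finset.sum_sub_distrib, ← Finset.mul_sum, ← Finset.mul_sum, ← hl]
          ring
  -- Part (ii): deg is surjective
  · intro r
    obtain ⟨a, b, hab⟩ := hE
    have hne : a ≠ b := fun h => hirr a (h ▸ hab)
    obtain ⟨j, k, hjk, hlt⟩ : ∃ j k, Adj j k ∧ j < k := by
      rcases hne.lt_or_gt with h | h
      exacts [⟨a, b, hab, h⟩, ⟨b, a, hsymm _ _ hab, h⟩]
    refine ⟨fun x y => if x = j ∧ y = k then r / ((mult j : ℝ) * mult k) else 0, ?_⟩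
    unfold degC
    have hmj : ((mult j : ℝ)) ≠ 0 := by exact_mod_cast (hmult j).ne'
    have hmk : ((mult k : ℝ)) ≠ 0 := by exact_mod_cast (hmult k).ne'
    rw [Finset.sum_eq_single j]
    rotate_left
    · intro x _ hx
      refine Finset.sum_eq_zero fun y _ => ?_
      by_cases hc : Adj x y ∧ x < y
      · have h1 : ¬ (x = j ∧ y = k) := fun h => hx h.1
        have h2 : ¬ (y = j ∧ x = k) := by
          rintro ⟨rfl, rfl⟩
          exact absurd hlt (asymm hc.2)
        simp [hc, h1, h2]
      · simp [hc]
    · intro h; exact absurd (mem_univ j) h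
    rw [Finset.sum_eq_single k]
    rotate_left
    · intro y _ hy
      by_cases hc : Adj j y ∧ j < y
      · have h1 : ¬ (j = j ∧ y = k) := fun h => hy h.2
        have h2 : ¬ (y = j ∧ j = k) := by
          rintro ⟨rfl, _⟩
          exact lt_irrefl _ hc.2
        simp [hc, hy, h2]
      · simp [hc]
    · intro h; exact absurd (mem_univ k) h
    have h2 : ¬ (k = j ∧ j = k) := fun h => hlt.ne h.2
    simp only [hjk, hlt, and_self, if_true, h2, if_false, sub_zero]
    field_simp
  -- Part (iii)
  · intro η hdeg
    obtain ⟨a0, b0, hab0⟩ := hE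
    have hneV : Nonempty V := ⟨a0⟩
    set ε : V → V → ℝ := fun x y =>
      if x < y then η x y else if y < x then - η x y else 0 with hε
    set B : V → ℝ := fun i =>
      ∑ j, if Adj i j then (mult i : ℝ) * mult j * ε i j else 0 with hB
    have hεd : ∀ x, ε x x = 0 := fun x => by simp [hε]
    have hBsum : ∑ i, B i = 0 := by
      have hps := pair_sum (fun i j => if Adj i j then (mult i : ℝ) * mult j * ε i j else 0)
        (fun i => by simp [hirr i])
      rw [← hdeg]
      unfold degC
      calc ∑ i, B i
          = ∑ i, ∑ j, (if i < j then
              (if Adj i j then (mult i : ℝ) * mult j * ε i j else 0)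
              + (if Adj j i then (mult j : ℝ) * mult i * ε j i else 0) else 0) := hps.symm
        _ = ∑ j, ∑ k, (if Adj j k ∧ j < k then (mult j : ℝ) * (mult k : ℝ) * (η j k - η k j) else 0) := ?_
      refine sum_congr rfl fun i _ => sum_congr rfl fun j _ => ?_
      by_cases hlt : i < j
      · by_cases hA : Adj i j
        · have hA' : Adj j i := hsymm _ _ hA
          have hnlt : ¬ j < i := asymm hlt
          simp only [hlt, hA, hA', hnlt, and_true, true_and, if_true, hε, if_false]
          ring
        · have hA' : ¬ Adj j i := fun h => hA (hsymm _ _ h)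
          simp [hA, hA', hlt]
      · simp [hlt]
    obtain ⟨c, hc⟩ := lap_surj_onto Adj mult hsymm hconn hmult B hBsum
    refine ⟨fun i j => c j + ε i j, ?_, ?_⟩
    · intro i
      unfold linAt
      simp only
      have hci := congrFun hc i
      rw [lap_apply] at hci
      have hmi : ((mult i : ℝ)) ≠ 0 := by exact_mod_cast (hmult i).ne'
      apply mul_left_cancel₀ hmi
      rw [hεd i, add_zero]
      calc (mult i : ℝ) * (c i * ∑ j, (if Adj i j then (mult j : ℝ) else 0))
          = ∑ j, (mult i : ℝ) * (c i * (if Adj i j then (mult j : ℝ) else 0)) := by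
            rw [Finset.mul_sum, Finset.mul_sum]
        _ = ∑ j, (w Adj mult i j * (c i - c j)
              - (if Adj i j then (mult i : ℝ) * mult j * ε i j else 0)
              + (mult i : ℝ) * (if Adj i j then (mult j : ℝ) * (c j + ε i j) else 0)) := by
            refine sum_congr rfl fun j _ => ?_
            by_cases h : Adj i j <;> simp [w, h] <;> ring
        _ = ((∑ j, w Adj mult i j * (c i - c j)) - B i)
              + (mult i : ℝ) * ∑ j, (if Adj i j then (mult j : ℝ) * (c j + ε i j) else 0) := by
            rw [Finset.sum_add_distrib, Finset.sum_sub_distrib, ← Finset.mul_sum, hB]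
        _ = (mult i : ℝ) * ∑ j, (if Adj i j then (mult j : ℝ) * (c j + ε i j) else 0) := by
            rw [hci]; ring
    · intro j k hA hlt
      have hnlt : ¬ k < j := asymm hlt
      constructor
      · show η j k = (c k + ε j k) - (c k + ε k k)
        simp [hε, hlt, hεd]
      · show η k j = (c j + ε j j) - (c j + ε k j)
        simp [hε, hlt, hnlt, hεd]
end

section
/- Let G be a finite connected graph with positive integer vertex multiplicities. Suppose a 1-cochain is given by transition data {φ_{jk}}_{j≺k} (affine functions on edges) and a 0-cochain {φ_i} of simple functions (not necessarily linear at the vertices) satisfies φ_j − φ_k = φ_{jk} on each edge jk. Define the degree of the curvature as deg_c := Σ_i mult(i)·( −φ_i(i)·Σ_{j∼i} mult(j) + Σ_{j∼i} mult(j)·φ_i(j) ). Then deg_c = Σ_{j≺k} mult(j)·mult(k)·(φ_{jk}(k) − φ_{jk}(j)). -/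
open Finset

/-- Degree of the curvature equals the degree of the transition data
(Yu, Proposition 5.7).  `φ i j` is the value at `j` of the simple function
`φ_i` on the star of `i`; `t j k` (for adjacent `j < k`) is the value at `k`
of the transition function `φ_{jk}` and `t k j` its value at `j`.
If `φ_j − φ_k = φ_{jk}` on each edge, then
`Σ_i mult(i)·(−φ_i(i)·Σ_{j∼i} mult(j) + Σ_{j∼i} mult(j)·φ_i(j))
  = Σ_{j≺k} mult(j)·mult(k)·(φ_{jk}(k) − φ_{jk}(j))`. -/
theorem deg_curvature_eq_deg_transition
    {V : Type} [Fintype V] [LinearOrder V]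
    (Adj : V → V → Prop) [DecidableRel Adj]
    (hsymm : ∀ j k, Adj j k → Adj k j) (hirr : ∀ j, ¬ Adj j j)
    (hconn : ∀ u v : V, Relation.ReflTransGen Adj u v)
    (mult : V → ℤ) (hmult : ∀ i, 0 < mult i)
    (φ t : V → V → ℝ)
    (htrans : ∀ j k, Adj j k → j < k →
      φ j k - φ k k = t j k ∧ φ j j - φ k j = t k j) :
    ∑ i, (mult i : ℝ) *
        (-(φ i i) * (∑ j, if Adj i j then (mult j : ℝ) else 0)
          + ∑ j, if Adj i j then (mult j : ℝ) * φ i j else 0)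
      = ∑ j, ∑ k, if Adj j k ∧ j < k then
          (mult j : ℝ) * (mult k : ℝ) * (t j k - t k j) else 0 := by
  classical
  have step1 : ∑ i, (mult i : ℝ) *
        (-(φ i i) * (∑ j, if Adj i j then (mult j : ℝ) else 0)
          + ∑ j, if Adj i j then (mult j : ℝ) * φ i j else 0)
      = ∑ i, ∑ j, if Adj i j then (mult i : ℝ) * (mult j : ℝ) * (φ i j - φ i i) else 0 := by
    refine Finset.sum_congr rfl fun i _ => ?_
    simp only [mul_add, Finset.mul_sum, ← Finset.sum_add_distrib]
    refine Finset.sum_congr rfl fun j _ => ?_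
    split_ifs <;> ring
  rw [step1]
  have step2 : ∀ i j, (if Adj i j then (mult i : ℝ) * (mult j : ℝ) * (φ i j - φ i i) else 0)
      = (if Adj i j ∧ i < j then (mult i : ℝ) * (mult j : ℝ) * (φ i j - φ i i) else 0)
      + (if Adj i j ∧ j < i then (mult i : ℝ) * (mult j : ℝ) * (φ i j - φ i i) else 0) := by
    intro i j
    rcases lt_trichotomy i j with h | h | h
    · simp [h, not_lt.mpr h.le]
    · subst h; simp [hirr i]
    · simp [h, not_lt.mpr h.le]
  simp only [step2, Finset.sum_add_distrib]
  have step3 : ∑ i, ∑ j, (if Adj i j ∧ j < i then (mult i : ℝ) * (mult j : ℝ) * (φ i j - φ i i) else 0)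
      = ∑ j, ∑ k, (if Adj j k ∧ j < k then (mult k : ℝ) * (mult j : ℝ) * (φ k j - φ k k) else 0) := by
    rw [Finset.sum_comm]
    refine Finset.sum_congr rfl fun j _ => Finset.sum_congr rfl fun k _ => ?_
    have : (Adj k j ∧ j < k) ↔ (Adj j k ∧ j < k) :=
      and_congr_left fun _ => ⟨hsymm k j, hsymm j k⟩
    exact if_congr this rfl rfl
  rw [step3, ← Finset.sum_add_distrib]
  refine Finset.sum_congr rfl fun j _ => ?_
  rw [← Finset.sum_add_distrib]
  refine Finset.sum_congr rfl fun k _ => ?_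
  by_cases h : Adj j k ∧ j < k
  · rw [if_pos h, if_pos h, if_pos h]
    obtain ⟨h1, h2⟩ := htrans j k h.1 h.2
    rw [← h1, ← h2]; ring
  · rw [if_neg h, if_neg h, if_neg h]; ring
end

section
/- Let G be a path graph with vertices 0, 1, …, m (in order) and multiplicities mult(i) ∈ ℤ_{>0}, and let transition data on the edge between i and i+1 be the affine function with values φ_{i,i+1}(i) = a_i and φ_{i,i+1}(i+1) = b_i. Then the degree deg = Σ_{i=0}^{m−1} mult(i)·mult(i+1)·(b_i − a_i), and this 1-cochain is a coboundary (i.e., lies in the image of d⁰ from vertex-star functions linear at each interior vertex) if and only if deg = 0 — where linearity at the interior vertex i (0 < i < m) means mult(i−1)·(φ_i(i−1) − φ_i(i)) + mult(i+1)·(φ_i(i+1) − φ_i(i)) = 0, and at the endpoints 0 and m the linearity condition reads mult(1)·(φ_0(1) − φ_0(0)) = 0 and mult(m−1)·(φ_m(m−1) − φ_m(m)) = 0. -/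
open Finset

private lemma telescope_aux (m : ℕ) (hm : 1 ≤ m) (w z : ℕ → ℝ)
    (h : ∀ i, 0 < i → i < m → w i = z (i - 1)) :
    ∑ i ∈ Finset.range m, (w i - z i) = w 0 - z (m - 1) := by
  induction m with
  | zero => omega
  | succ n ih =>
    rcases Nat.lt_or_ge 1 (n + 1) with h1 | h1
    · have hn : 1 ≤ n := by omega
      rw [Finset.sum_range_succ, ih hn (fun i hi hin => h i hi (by omega)),
        h n hn (Nat.lt_succ_self n)]
      simp
    · have hn0 : n = 0 := by omega
      subst hn0
      simp

private noncomputable def pathD (mult : ℕ → ℤ) (a b : ℕ → ℝ) : ℕ → ℝ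
  | 0 => -b 0
  | (i + 1) => -b (i + 1) + ((mult i : ℝ) / (mult (i + 2) : ℝ)) * (pathD mult a b i + a i)

private noncomputable def pathC (mult : ℕ → ℤ) (a b : ℕ → ℝ) : ℕ → ℝ
  | 0 => 0
  | (i + 1) => pathC mult a b i + pathD mult a b i

/-- Path graph case of Yu, Proposition 5.2: on the path with vertices
`0, 1, …, m`, the 1-cochain with values `a i` (at `i`) and `b i` (at `i+1`)
on the edge `{i, i+1}` is a coboundary of a collection of vertex-star
functions linear at each vertex if and only if its degree
`Σ_i mult(i)·mult(i+1)·(b i − a i)` vanishes. -/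
theorem path_coboundary_iff_deg_zero
    (m : ℕ) (hm : 1 ≤ m)
    (mult : ℕ → ℤ) (hmult : ∀ i ≤ m, 0 < mult i)
    (a b : ℕ → ℝ) :
    (∃ φ : ℕ → ℕ → ℝ,
      ((mult 1 : ℝ) * (φ 0 1 - φ 0 0) = 0) ∧
      ((mult (m - 1) : ℝ) * (φ m (m - 1) - φ m m) = 0) ∧
      (∀ i, 0 < i → i < m →
        (mult (i - 1) : ℝ) * (φ i (i - 1) - φ i i)
          + (mult (i + 1) : ℝ) * (φ i (i + 1) - φ i i) = 0) ∧
      (∀ i < m, φ i (i + 1) - φ (i + 1) (i + 1) = b i ∧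
        φ i i - φ (i + 1) i = a i))
    ↔ ∑ i ∈ Finset.range m, (mult i : ℝ) * (mult (i + 1) : ℝ) * (b i - a i) = 0 := by
  constructor
  · rintro ⟨φ, h0, hmv, hint, hedge⟩
    set w : ℕ → ℝ := fun i => (mult i : ℝ) * (mult (i + 1) : ℝ) * (b i + φ (i + 1) (i + 1) - φ i i) with hw
    set z : ℕ → ℝ := fun i => (mult i : ℝ) * (mult (i + 1) : ℝ) * (φ (i + 1) (i + 1) - φ i i + a i) with hz
    have hterm : ∀ i ∈ Finset.range m,
        (mult i : ℝ) * (mult (i + 1) : ℝ) * (b i - a i) = w i - z i := by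
      intro i hi
      simp only [hw, hz]
      ring
    rw [Finset.sum_congr rfl hterm]
    have htel : ∀ i, 0 < i → i < m → w i = z (i - 1) := by
      intro i hi him
      obtain ⟨hb, _⟩ := hedge i him
      obtain ⟨_, ha'⟩ := hedge (i - 1) (by omega)
      have hi1 : i - 1 + 1 = i := by omega
      rw [hi1] at ha'
      have hl := hint i hi him
      have hzz : z (i - 1) = (mult (i - 1) : ℝ) * (mult i : ℝ) *
          (φ i i - φ (i - 1) (i - 1) + a (i - 1)) := by
        simp only [hz, hi1]
      rw [hzz]
      simp only [hw]
      linear_combination (mult i : ℝ) * hl - ((mult i : ℝ) * (mult (i + 1) : ℝ)) * hb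
        + ((mult (i - 1) : ℝ) * (mult i : ℝ)) * ha'
    rw [telescope_aux m hm w z htel]
    have hm1 : m - 1 + 1 = m := by omega
    obtain ⟨hb0, _⟩ := hedge 0 hm
    obtain ⟨_, ham⟩ := hedge (m - 1) (by omega)
    rw [hm1] at ham
    have hw0 : w 0 = 0 := by
      simp only [hw]
      linear_combination (mult 0 : ℝ) * h0 - ((mult 0 : ℝ) * (mult 1 : ℝ)) * hb0
    have hzm : z (m - 1) = 0 := by
      have hzz : z (m - 1) = (mult (m - 1) : ℝ) * (mult m : ℝ) *
          (φ m m - φ (m - 1) (m - 1) + a (m - 1)) := by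
        simp only [hz, hm1]
      rw [hzz]
      linear_combination (-(mult m : ℝ)) * hmv - ((mult (m - 1) : ℝ) * (mult m : ℝ)) * ham
    rw [hw0, hzm]
    ring
  · intro hdeg
    set d : ℕ → ℝ := pathD mult a b with hd
    set c : ℕ → ℝ := pathC mult a b with hc
    have hd0 : d 0 = -b 0 := rfl
    have hdsucc : ∀ j, d (j + 1)
        = -b (j + 1) + ((mult j : ℝ) / (mult (j + 2) : ℝ)) * (d j + a j) := fun j => rfl
    have hcsucc : ∀ j, c (j + 1) = c j + d j := fun j => rfl
    have hmne : ∀ i ≤ m, (mult i : ℝ) ≠ 0 := by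
      intro i hi
      exact_mod_cast (hmult i hi).ne'
    have hm1 : m - 1 + 1 = m := by omega
    have hrec : ∀ i, 0 < i → i < m →
        (mult (i + 1) : ℝ) * (b i + d i) = (mult (i - 1) : ℝ) * (d (i - 1) + a (i - 1)) := by
      intro i hi him
      obtain ⟨j, rfl⟩ : ∃ j, i = j + 1 := ⟨i - 1, by omega⟩
      have hne : (mult (j + 2) : ℝ) ≠ 0 := hmne _ (by omega)
      simp only [Nat.add_sub_cancel]
      rw [hdsucc j]
      field_simp
      ring
    set w : ℕ → ℝ := fun i => (mult i : ℝ) * (mult (i + 1) : ℝ) * (b i + d i) with hw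
    set z : ℕ → ℝ := fun i => (mult i : ℝ) * (mult (i + 1) : ℝ) * (d i + a i) with hz
    have htel : ∀ i, 0 < i → i < m → w i = z (i - 1) := by
      intro i hi him
      have hi1 : i - 1 + 1 = i := by omega
      have hzz : z (i - 1) = (mult (i - 1) : ℝ) * (mult i : ℝ) * (d (i - 1) + a (i - 1)) := by
        simp only [hz, hi1]
      rw [hzz]
      simp only [hw]
      linear_combination (mult i : ℝ) * hrec i hi him
    have hsum : ∑ i ∈ Finset.range m, (w i - z i) = w 0 - z (m - 1) :=
      telescope_aux m hm w z htel
    have hterm : ∀ i ∈ Finset.range m,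
        (mult i : ℝ) * (mult (i + 1) : ℝ) * (b i - a i) = w i - z i := by
      intro i hi
      simp only [hw, hz]
      ring
    rw [Finset.sum_congr rfl hterm, hsum] at hdeg
    have hw0 : w 0 = 0 := by
      simp only [hw]
      rw [hd0]
      ring
    have hzm : z (m - 1) = 0 := by linarith
    have hdm : d (m - 1) + a (m - 1) = 0 := by
      have hzz : (mult (m - 1) : ℝ) * (mult m : ℝ) * (d (m - 1) + a (m - 1)) = 0 := by
        have h1 : z (m - 1) = (mult (m - 1) : ℝ) * (mult m : ℝ) * (d (m - 1) + a (m - 1)) := by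
          simp only [hz, hm1]
        rw [← h1]
        exact hzm
      have h1 : (mult (m - 1) : ℝ) ≠ 0 := hmne _ (by omega)
      have h2 : (mult m : ℝ) ≠ 0 := hmne _ le_rfl
      have h3 := mul_eq_zero.mp hzz
      rcases h3 with h3 | h3
      · exact absurd h3 (mul_ne_zero h1 h2)
      · exact h3
    set Φ : ℕ → ℕ → ℝ := fun i j => if j = i + 1 then b i + c (i + 1)
      else if j + 1 = i then c j - a j else c i with hΦ
    have hΦ1 : ∀ i, Φ i (i + 1) = b i + c (i + 1) := by
      intro i
      show (if i + 1 = i + 1 then b i + c (i + 1)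
        else if i + 1 + 1 = i then c (i + 1) - a (i + 1) else c i) = b i + c (i + 1)
      rw [if_pos rfl]
    have hΦ2 : ∀ i j, j + 1 = i → Φ i j = c j - a j := by
      intro i j h
      show (if j = i + 1 then b i + c (i + 1)
        else if j + 1 = i then c j - a j else c i) = c j - a j
      rw [if_neg (by omega), if_pos h]
    have hΦ3 : ∀ i, Φ i i = c i := by
      intro i
      show (if i = i + 1 then b i + c (i + 1)
        else if i + 1 = i then c i - a i else c i) = c i
      rw [if_neg (by omega), if_neg (by omega)]
    refine ⟨Φ, ?_, ?_, ?_, ?_⟩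
    · rw [hΦ1 0, hΦ3 0]
      linear_combination (mult 1 : ℝ) * hcsucc 0 + (mult 1 : ℝ) * hd0
    · rw [hΦ2 m (m - 1) hm1, hΦ3 m]
      have hcm := hcsucc (m - 1)
      rw [hm1] at hcm
      linear_combination (-(mult (m - 1) : ℝ)) * hcm - (mult (m - 1) : ℝ) * hdm
    · intro i hi him
      have e2 : i - 1 + 1 = i := by omega
      rw [hΦ2 i (i - 1) e2, hΦ3 i, hΦ1 i]
      have hci := hcsucc (i - 1)
      rw [e2] at hci
      have hci1 := hcsucc i
      linear_combination hrec i hi him - (mult (i - 1) : ℝ) * hci + (mult (i + 1) : ℝ) * hci1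
    · intro i him
      constructor
      · rw [hΦ1 i, hΦ3 (i + 1)]
        ring
      · rw [hΦ3 i, hΦ2 (i + 1) i rfl]
        ring
end

section
/- Let G be a cycle graph with vertices 0, 1, …, m−1 (indices mod m, m ≥ 3) and multiplicities mult(i) ∈ ℤ_{>0}. With C⁰ the space of collections of vertex-star functions linear at each vertex (for a cycle, linearity at i reads mult(i−1)·(φ_i(i−1) − φ_i(i)) + mult(i+1)·(φ_i(i+1) − φ_i(i)) = 0, so C⁰ has dimension 2m), and C¹ ≅ ℝ^{2m} the edge cochains, the quotient C¹/im(d⁰) is one-dimensional, and the class of a cochain {φ_{i,i+1}} is determined by the number Σ_{i} mult(i)·mult(i+1)·(φ_{i,i+1}(i+1) − φ_{i,i+1}(i)). -/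
open Finset
open Fin.NatCast

/-- Degree of a 1-cochain on the cycle with `m + 3` vertices: on the edge
from `i` to `i+1` (cyclically), the affine function has value `a i` at `i`
and `b i` at `i+1`. -/
def cycleDeg (m : ℕ) (mult : Fin (m + 3) → ℤ) (a b : Fin (m + 3) → ℝ) : ℝ :=
  ∑ i : Fin (m + 3), (mult i : ℝ) * (mult (i + 1) : ℝ) * (b i - a i)

/-- Linearity at the vertex `i` of the cycle (neighbors `i − 1` and `i + 1`). -/
def cycleLinAt (m : ℕ) (mult : Fin (m + 3) → ℤ)
    (φ : Fin (m + 3) → Fin (m + 3) → ℝ) (i : Fin (m + 3)) : Prop :=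
  (mult (i - 1) : ℝ) * (φ i (i - 1) - φ i i)
    + (mult (i + 1) : ℝ) * (φ i (i + 1) - φ i i) = 0

noncomputable def psum (m : ℕ) (f : Fin (m + 3) → ℝ) (i : Fin (m + 3)) : ℝ :=
  ∑ j ∈ Finset.range i.val, f j

lemma psum_step (m : ℕ) (f : Fin (m + 3) → ℝ) (hf : ∑ i, f i = 0) (i : Fin (m + 3)) :
    psum m f (i + 1) = psum m f i + f i := by
  rcases lt_or_eq_of_le (Nat.lt_succ_iff.mp i.isLt) with h | h
  · have hv : (i + 1).val = i.val + 1 := Fin.val_add_one_of_lt (by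
      rw [Fin.lt_iff_val_lt_val, Fin.val_last]; omega)
    rw [psum, psum, hv, Finset.sum_range_succ, Fin.cast_val_eq_self]
  · have hi : i = Fin.last (m + 2) := by ext; simpa [Fin.val_last] using h
    have h1 : i + 1 = 0 := by rw [hi]; exact Fin.last_add_one _
    rw [h1]
    have htot : ∑ j ∈ Finset.range (m + 3), f j = 0 := by
      rw [← hf, ← Fin.sum_univ_eq_sum_range (fun j => f (j : Fin (m+3)))]
      exact Finset.sum_congr rfl fun x _ => by rw [Fin.cast_val_eq_self]
    have key : (∑ j ∈ Finset.range (m + 3), f j) = psum m f i + f i := by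
      rw [Finset.sum_range_succ, psum, hi]
      have : ((m + 2 : ℕ) : Fin (m + 3)) = Fin.last (m + 2) := by
        ext
        rw [Fin.val_cast_of_lt (by omega), Fin.val_last]
      rw [this, Fin.val_last]
    rw [psum]
    simp only [Fin.val_zero, Finset.range_zero, Finset.sum_empty]
    rw [← key, htot]

lemma fin_one_ne_zero (m : ℕ) : (1 : Fin (m + 3)) ≠ 0 := by
  simp [Fin.ext_iff]

lemma fin_two_ne_zero (m : ℕ) : (2 : Fin (m + 3)) ≠ 0 := by
  have : ((2 : Fin (m+3)) : ℕ) = 2 := by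
    rw [show (2 : Fin (m+3)) = ((2 : ℕ) : Fin (m+3)) by norm_cast,
        Fin.val_cast_of_lt (by omega)]
  rw [Ne, Fin.ext_iff, this]; simp

lemma fin_add_one_ne (m : ℕ) (i : Fin (m + 3)) : i + 1 ≠ i := by
  intro h
  have h2 : i + 1 - i = i - i := by rw [h]
  simp only [add_sub_cancel_left, sub_self] at h2
  exact fin_one_ne_zero m h2

lemma fin_sub_one_ne (m : ℕ) (i : Fin (m + 3)) : i - 1 ≠ i := by
  intro h
  have h2 : i - 1 + 1 = i + 1 := by rw [h]
  rw [sub_add_cancel] at h2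
  exact fin_add_one_ne m i h2.symm

lemma fin_add_two_ne (m : ℕ) (i : Fin (m + 3)) : i + 1 + 1 ≠ i := by
  intro h
  have h2 : i + 2 = i := by rw [add_assoc, one_add_one_eq_two] at h; exact h
  have h3 : i + 2 - i = i - i := by rw [h2]
  rw [add_sub_cancel_left, sub_self] at h3
  exact fin_two_ne_zero m h3

lemma fin_sub_ne_add (m : ℕ) (i : Fin (m + 3)) : i - 1 ≠ i + 1 := by
  intro h
  have h2 : i - 1 + 1 = i + 1 + 1 := by rw [h]
  rw [sub_add_cancel] at h2
  exact fin_add_two_ne m i h2.symm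

/-- Cycle graph case of Yu, Proposition 5.2: for the cycle with `m + 3 ≥ 3`
vertices, `C¹/im(d⁰)` is one-dimensional and the class of a cochain is
determined by its degree: (i) every coboundary of a collection of vertex-star
functions linear at each vertex has degree `0`; (ii) every cochain of degree
`0` is such a coboundary; (iii) the degree map is surjective onto `ℝ`. -/
theorem cycle_h1_one_dimensional
    (m : ℕ) (mult : Fin (m + 3) → ℤ) (hmult : ∀ i, 0 < mult i) :
    (∀ φ : Fin (m + 3) → Fin (m + 3) → ℝ, (∀ i, cycleLinAt m mult φ i) →
      cycleDeg m mult (fun i => φ i i - φ (i + 1) i)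
        (fun i => φ i (i + 1) - φ (i + 1) (i + 1)) = 0) ∧
    (∀ a b : Fin (m + 3) → ℝ, cycleDeg m mult a b = 0 →
      ∃ φ : Fin (m + 3) → Fin (m + 3) → ℝ, (∀ i, cycleLinAt m mult φ i) ∧
        ∀ i, φ i (i + 1) - φ (i + 1) (i + 1) = b i ∧
          φ i i - φ (i + 1) i = a i) ∧
    (∀ t : ℝ, ∃ a b : Fin (m + 3) → ℝ, cycleDeg m mult a b = t) := by
  have hmne : ∀ i, ((mult i : ℝ)) ≠ 0 := fun i => ne_of_gt (by exact_mod_cast hmult i)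
  have hmpos : ∀ i, (0:ℝ) < (mult i : ℝ) := fun i => by exact_mod_cast hmult i
  refine ⟨?_, ?_, ?_⟩
  · -- (i) coboundaries have degree 0
    intro φ hφ
    unfold cycleDeg
    have step1 : ∀ i : Fin (m+3),
        (mult i : ℝ) * (mult (i + 1) : ℝ) *
          ((φ i (i+1) - φ (i+1) (i+1)) - (φ i i - φ (i+1) i))
        = (mult i : ℝ) * ((mult (i+1) : ℝ) * (φ i (i+1) - φ i i))
          + (mult i : ℝ) * (mult (i+1) : ℝ) * (φ (i+1) i - φ (i+1) (i+1)) := by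
      intro i; ring
    rw [Finset.sum_congr rfl (fun i _ => step1 i), Finset.sum_add_distrib]
    have hre : ∑ i : Fin (m+3), (mult i : ℝ) * (mult (i+1) : ℝ) * (φ (i+1) i - φ (i+1) (i+1))
        = ∑ j : Fin (m+3), (mult j : ℝ) * ((mult (j-1) : ℝ) * (φ j (j-1) - φ j j)) := by
      apply Fintype.sum_equiv (Equiv.addRight (1 : Fin (m+3)))
      intro i
      simp only [Equiv.coe_addRight, add_sub_cancel_right]
      ring
    rw [hre, ← Finset.sum_add_distrib]
    apply Finset.sum_eq_zero
    intro i _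
    have h := hφ i
    unfold cycleLinAt at h
    linear_combination (mult i : ℝ) * h
  · -- (ii) degree-zero cochains are coboundaries
    intro a b hdeg
    unfold cycleDeg at hdeg
    set D : Fin (m+3) → ℝ := fun i => (mult i : ℝ) * (mult (i+1) : ℝ) * (b i - a i) with hDdef
    have hPstep : ∀ i, psum m D (i+1) = psum m D i + D i := psum_step m D hdeg
    set P : Fin (m+3) → ℝ := psum m D with hPdef
    have hWpos : (0:ℝ) < ∑ i : Fin (m+3), ((mult i : ℝ) * (mult (i+1) : ℝ))⁻¹ := by
      apply Finset.sum_pos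
      · intro i _
        exact inv_pos.mpr (mul_pos (hmpos i) (hmpos (i+1)))
      · exact univ_nonempty
    set t0 : ℝ := ((∑ i, b i) + ∑ i, P i / ((mult i : ℝ) * (mult (i+1) : ℝ)))
        / (∑ i : Fin (m+3), ((mult i : ℝ) * (mult (i+1) : ℝ))⁻¹) with ht0def
    set s : Fin (m+3) → ℝ := fun i => (t0 - P i) / ((mult i : ℝ) * (mult (i+1) : ℝ)) with hsdef
    have hws : ∀ i, (mult i : ℝ) * (mult (i+1) : ℝ) * s i = t0 - P i := by
      intro i
      have h : s i = (t0 - P i) / ((mult i : ℝ) * (mult (i+1) : ℝ)) := by rw [hsdef]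
      rw [h]
      exact mul_div_cancel₀ _ (mul_ne_zero (hmne i) (hmne (i+1)))
    have hssum : ∑ i, s i = ∑ i, b i := by
      have h1 : ∑ i, s i
          = t0 * (∑ i : Fin (m+3), ((mult i : ℝ) * (mult (i+1) : ℝ))⁻¹)
            - ∑ i, P i / ((mult i : ℝ) * (mult (i+1) : ℝ)) := by
        rw [Finset.mul_sum, ← Finset.sum_sub_distrib]
        apply Finset.sum_congr rfl
        intro i _
        rw [hsdef]
        field_simp
      have h2 : t0 * (∑ i : Fin (m+3), ((mult i : ℝ) * (mult (i+1) : ℝ))⁻¹)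
          = (∑ i, b i) + ∑ i, P i / ((mult i : ℝ) * (mult (i+1) : ℝ)) := by
        rw [ht0def, div_mul_cancel₀ _ (ne_of_gt hWpos)]
      rw [h1, h2]; ring
    have hesum : ∑ i, (s i - b i) = 0 := by
      rw [Finset.sum_sub_distrib, hssum, sub_self]
    have hcstep : ∀ i, psum m (fun i => s i - b i) (i+1)
        = psum m (fun i => s i - b i) i + (s i - b i) :=
      psum_step m _ hesum
    set c : Fin (m+3) → ℝ := psum m (fun i => s i - b i) with hcdef
    have hkey : ∀ i : Fin (m+3),
        (mult i : ℝ) * (mult (i+1) : ℝ) * s i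
          - (mult (i+1) : ℝ) * (mult (i+1+1) : ℝ) * s (i+1)
        = (mult i : ℝ) * (mult (i+1) : ℝ) * (b i - a i) := by
      intro i
      have h1 := hws i
      have h2 := hws (i+1)
      have h3 := hPstep i
      rw [hDdef] at h3
      simp only [← hPdef] at h3
      linarith
    clear_value s c
    set φ : Fin (m+3) → Fin (m+3) → ℝ := fun i j => if j = i then c i
        else if j = i + 1 then c i + s i
        else if j = i - 1 then c i - ((mult (i+1) : ℝ) / (mult (i-1) : ℝ)) * s i
        else 0 with hφdef
    have hval_self : ∀ i, φ i i = c i := fun i => by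
      simp [hφdef]
    have hval_next : ∀ i, φ i (i+1) = c i + s i := fun i => by
      simp [hφdef, fin_add_one_ne m i]
    have hval_prev : ∀ i, φ i (i-1)
        = c i - ((mult (i+1) : ℝ) / (mult (i-1) : ℝ)) * s i := fun i => by
      simp [hφdef, fin_sub_one_ne m i, fin_sub_ne_add m i]
    have hval_prev' : ∀ i, φ (i+1) i
        = c (i+1) - ((mult (i+1+1) : ℝ) / (mult i : ℝ)) * s (i+1) := fun i => by
      have h := hval_prev (i+1)
      rwa [add_sub_cancel_right] at h
    refine ⟨φ, ?_, ?_⟩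
    · intro i
      unfold cycleLinAt
      rw [hval_prev i, hval_self i, hval_next i]
      have hne := hmne (i-1)
      field_simp
      ring
    · intro i
      constructor
      · rw [hval_next i, hval_self (i+1), hcstep i]
        ring
      · rw [hval_self i, hval_prev' i, hcstep i]
        have h6 : (mult i : ℝ) * s i - (mult (i+1+1) : ℝ) * s (i+1)
            = (mult i : ℝ) * (b i - a i) := by
          apply mul_left_cancel₀ (hmne (i+1))
          linear_combination hkey i
        have h5 : (mult (i+1+1) : ℝ) / (mult i : ℝ) * s (i+1) = s i - (b i - a i) := by
          rw [div_mul_eq_mul_div, div_eq_iff (hmne i)]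
          linear_combination -h6
        rw [h5]
        ring
  · -- (iii) surjectivity of the degree
    intro t
    refine ⟨0, fun i => if i = 0 then t / ((mult 0 : ℝ) * (mult 1 : ℝ)) else 0, ?_⟩
    unfold cycleDeg
    simp only [Pi.zero_apply, sub_zero, mul_ite, mul_zero]
    rw [Finset.sum_ite_eq' Finset.univ (0 : Fin (m+3))
      (fun i => (mult i : ℝ) * (mult (i+1) : ℝ) * (t / ((mult 0 : ℝ) * (mult 1 : ℝ))))]
    simp only [Finset.mem_univ, if_pos, zero_add]
    exact mul_div_cancel₀ _ (mul_ne_zero (hmne 0) (hmne 1))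
end
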